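/- arXiv:1601.03229 — 2 statements merged into one kernel-verified Lean document; each statement's English description precedes it below -/
import Mathlib

section
/- Define ρ(x) = ln( Pr[x + Lap(λ) > θ] / Pr[x - 1 + Lap(λ) > θ] ) and ρ⊤(x) = 1/λ for x < θ + 1, and ρ⊤(x) = (1/λ)·exp((θ + 1 - x)/λ) for x ≥ θ + 1. Then ρ(x) ≤ ρ⊤(x) for all real x. -/
open Real MeasureTheory

/-- Pr[Lap(l) > t] for the Laplace distribution with scale l,
density (1/(2l))·exp(-|y|/l). -/
noncomputable def lapTail (l t : ℝ) : ℝ :=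
  ∫ y in Set.Ioi t, (1 / (2 * l)) * Real.exp (-|y| / l)

/-- Pr[Lap(l) ≤ t]. -/
noncomputable def lapCDF (l t : ℝ) : ℝ :=
  ∫ y in Set.Iic t, (1 / (2 * l)) * Real.exp (-|y| / l)

/-- The upper bound ρ⊤. -/
noncomputable def rhoTop (l θ x : ℝ) : ℝ :=
  if x < θ + 1 then 1 / l else (1 / l) * Real.exp ((θ + 1 - x) / l)

lemma tail_exp (l t : ℝ) (hl : 0 < l) :
    ∫ y in Set.Ioi t, Real.exp (-(y / l)) = l * Real.exp (-(t / l)) := by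
  have h := integral_comp_mul_left_Ioi (fun u => Real.exp (-u)) t (b := l⁻¹)
    (by positivity)
  simp only [smul_eq_mul, inv_inv] at h
  have e1 : ∀ y : ℝ, l⁻¹ * y = y / l := fun y => by field_simp
  simp only [e1] at h
  rw [h, integral_exp_neg_Ioi]

lemma lapTail_of_nonneg (l t : ℝ) (hl : 0 < l) (ht : 0 ≤ t) :
    lapTail l t = Real.exp (-(t / l)) / 2 := by
  unfold lapTail
  rw [setIntegral_congr_fun measurableSet_Ioi
    (g := fun y => (1 / (2 * l)) * Real.exp (-(y / l)))
    (fun y hy => by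
      have : 0 < y := lt_of_le_of_lt ht hy
      rw [abs_of_pos this, neg_div])]
  rw [MeasureTheory.integral_const_mul, tail_exp l t hl]
  field_simp

lemma integrableOn_lap (l : ℝ) (hl : 0 < l) (t : ℝ) :
    IntegrableOn (fun y => (1 / (2 * l)) * Real.exp (-|y| / l)) (Set.Ioi t) := by
  have hmaj : IntegrableOn (fun y => (1 / (2 * l)) * Real.exp (-l⁻¹ * y)) (Set.Ioi t) :=
    (exp_neg_integrableOn_Ioi t (b := l⁻¹) (by positivity)).const_mul _
  apply hmaj.mono' ((Continuous.aestronglyMeasurable (by continuity)).restrict)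
  filter_upwards with y
  rw [Real.norm_eq_abs, abs_mul, abs_of_pos (a := 1 / (2*l)) (by positivity),
    abs_of_pos (Real.exp_pos _)]
  apply mul_le_mul_of_nonneg_left _ (by positivity)
  apply Real.exp_le_exp.2
  have : -l⁻¹ * y = -y / l := by field_simp
  rw [this]
  gcongr
  exact le_abs_self y

lemma lapTail_of_neg (l t : ℝ) (hl : 0 < l) (ht : t < 0) :
    lapTail l t = 1 - Real.exp (t / l) / 2 := by
  have hunion : Set.Ioc t 0 ∪ Set.Ioi (0:ℝ) = Set.Ioi t := Set.Ioc_union_Ioi_eq_Ioi ht.le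
  unfold lapTail
  rw [← hunion, setIntegral_union (Set.Ioc_disjoint_Ioi le_rfl) measurableSet_Ioi
    ((integrableOn_lap l hl t).mono_set (by rw [← hunion]; exact Set.subset_union_left))
    ((integrableOn_lap l hl t).mono_set (by rw [← hunion]; exact Set.subset_union_right))]
  have h2 : ∫ y in Set.Ioi (0:ℝ), (1 / (2 * l)) * Real.exp (-|y| / l)
      = Real.exp (-(0 / l)) / 2 := lapTail_of_nonneg l 0 hl le_rfl
  rw [h2]
  have h1 : ∫ y in Set.Ioc t 0, (1 / (2 * l)) * Real.exp (-|y| / l)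
      = (1 - Real.exp (t / l)) / 2 := by
    rw [setIntegral_congr_fun measurableSet_Ioc
      (g := fun y => (1 / (2 * l)) * Real.exp (y / l))
      (fun y hy => by
        rw [abs_of_nonpos hy.2, neg_neg])]
    rw [← intervalIntegral.integral_of_le ht.le, intervalIntegral.integral_const_mul,
      intervalIntegral.integral_comp_div (f := Real.exp) (c := l) hl.ne']
    rw [integral_exp]
    simp only [smul_eq_mul, zero_div, Real.exp_zero]
    field_simp
  rw [h1]
  simp
  ring

lemma lapTail_pos (l t : ℝ) (hl : 0 < l) : 0 < lapTail l t := by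
  rcases le_or_gt 0 t with h | h
  · rw [lapTail_of_nonneg l t hl h]; positivity
  · rw [lapTail_of_neg l t hl h]
    have : Real.exp (t / l) < 1 := by
      rw [← Real.exp_zero]
      exact Real.exp_lt_exp.2 (div_neg_of_neg_of_pos h hl)
    linarith

/-- ρ(x) ≤ ρ⊤(x) for all x. -/
theorem stmt2 (l θ : ℝ) (hl : 0 < l) :
    ∀ x : ℝ, Real.log (lapTail l (θ - x) / lapTail l (θ - (x - 1))) ≤ rhoTop l θ x := by
  intro x
  have hA := lapTail_pos l (θ - x) hl
  have hB := lapTail_pos l (θ - (x - 1)) hl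
  rcases le_or_gt 0 (θ - x) with h1 | h1
  · -- x ≤ θ
    rw [lapTail_of_nonneg l (θ - x) hl h1,
      lapTail_of_nonneg l (θ - (x - 1)) hl (by linarith)]
    have hrt : rhoTop l θ x = 1 / l := by
      rw [rhoTop, if_pos (by linarith)]
    rw [hrt]
    have hratio : Real.exp (-((θ - x) / l)) / 2 / (Real.exp (-((θ - (x - 1)) / l)) / 2)
        = Real.exp (1 / l) := by
      rw [div_div_div_cancel_right₀, ← Real.exp_sub]
      · congr 1
        field_simp
        ring
      · norm_num

    rw [hratio, Real.log_exp]
  · rcases le_or_gt 0 (θ - (x - 1)) with h2 | h2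
    · -- θ < x ≤ θ + 1
      have hrt : rhoTop l θ x = 1 / l := by
        rw [rhoTop]
        split_ifs with h
        · rfl
        · have hx : x = θ + 1 := by linarith [not_lt.1 h]
          rw [hx]
          simp
      rw [lapTail_of_neg l (θ - x) hl h1] at hA
      rw [lapTail_of_nonneg l (θ - (x - 1)) hl h2] at hB
      rw [hrt, lapTail_of_neg l (θ - x) hl h1, lapTail_of_nonneg l (θ - (x - 1)) hl h2]
      rw [Real.log_le_iff_le_exp (div_pos hA hB)]
      rw [div_le_iff₀ (by positivity)]
      set u := Real.exp ((θ - x) / l) with hu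
      have hupos : 0 < u := Real.exp_pos _
      have hBval : Real.exp (-((θ - (x - 1)) / l)) = u⁻¹ * Real.exp (-(1 / l)) := by
        rw [← Real.exp_neg, ← Real.exp_add]
        congr 1
        field_simp
        ring
      rw [hBval]
      have hprod : Real.exp (1 / l) * Real.exp (-(1 / l)) = 1 := by
        rw [← Real.exp_add]; simp
      have hrhs : Real.exp (1 / l) * (u⁻¹ * Real.exp (-(1 / l)) / 2) = u⁻¹ / 2 := by
        have : Real.exp (1 / l) * (u⁻¹ * Real.exp (-(1 / l)) / 2)
            = (Real.exp (1 / l) * Real.exp (-(1 / l))) * (u⁻¹ / 2) := by ring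
        rw [this, hprod, one_mul]
      rw [hrhs]
      have hui : u * u⁻¹ = 1 := mul_inv_cancel₀ hupos.ne'
      nlinarith [sq_nonneg (u - 1), mul_nonneg (sq_nonneg (u - 1)) (inv_nonneg.2 hupos.le),
        hui, hupos]
    · -- x > θ + 1
      rw [lapTail_of_neg l (θ - x) hl h1, lapTail_of_neg l (θ - (x - 1)) hl h2]
      have hrt : rhoTop l θ x = (1 / l) * Real.exp ((θ + 1 - x) / l) := by
        rw [rhoTop, if_neg (by linarith)]
      rw [hrt]
      set v := Real.exp ((θ + 1 - x) / l) with hv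
      have hvpos : 0 < v := Real.exp_pos _
      have hv1 : v ≤ 1 :=
        Real.exp_le_one_iff.2 (div_nonpos_of_nonpos_of_nonneg (by linarith) hl.le)
      set w := Real.exp (-(1 / l)) with hw
      have hwpos : 0 < w := Real.exp_pos _
      have hwb : 1 - 1 / l ≤ w := by
        have := Real.add_one_le_exp (-(1 / l))
        linarith
      have hw1 : w ≤ 1 :=
        Real.exp_le_one_iff.2 (by positivity |> neg_nonpos_of_nonneg)
      have hAval : Real.exp ((θ - x) / l) = v * w := by
        rw [hv, hw, ← Real.exp_add]
        congr 1
        field_simp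
        ring
      have hBval : Real.exp ((θ - (x - 1)) / l) = v := by
        rw [hv]
        congr 1
        ring
      rw [hAval, hBval]
      have hBpos : 0 < 1 - v / 2 := by linarith
      have hlog := Real.log_le_sub_one_of_pos
        (div_pos (show (0:ℝ) < 1 - v * w / 2 by nlinarith [mul_pos hvpos hwpos]) hBpos)
      refine hlog.trans ?_
      rw [div_sub_one hBpos.ne', div_le_iff₀ hBpos]
      have hla : 0 < 1 / l := by positivity
      nlinarith [mul_nonneg (mul_nonneg hla.le hvpos.le) (sub_nonneg.2 hv1),
        mul_nonneg hvpos.le (sub_nonneg.2 hwb)]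
end

section
/- Let λ > 0, t ≥ 1 an integer, and for each i let qᵢ, qᵢ' be reals with qᵢ' ≤ qᵢ ≤ qᵢ' + 1 (counting queries on neighboring datasets where the first dataset has one more tuple). Let f(x) = Pr[Lap(tλ) > x] and g(x) = Pr[Lap(tλ) ≤ x]. For any finite index sets I (|I| ≤ t) and O: ∫ h(x)·∏_{i∈I} f(x - qᵢ)·∏_{j∈O} g(x - qⱼ) dx ≤ e^{1/λ} · ∫ h(x)·∏_{i∈I} f(x - qᵢ')·∏_{j∈O} g(x - qⱼ') dx, where h is the density of θ + Lap(λ). Hence the improved SVT (single noisy threshold with scale λ, query noise scale tλ) satisfies ε-differential privacy when λ ≥ 2/ε in this direction of neighboring datasets. -/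
open Real MeasureTheory Set

noncomputable def lapDens (l : ℝ) : ℝ → ℝ := fun y => (1 / (2 * l)) * Real.exp (-|y| / l)

lemma lapDens_nonneg {l : ℝ} (hl : 0 < l) (y : ℝ) : 0 ≤ lapDens l y := by
  unfold lapDens; positivity

lemma lapDens_integrable {l : ℝ} (hl : 0 < l) : Integrable (lapDens l) := by
  have hIoi : IntegrableOn (fun y : ℝ => Real.exp (-|y| / l)) (Ioi 0) := by
    refine (exp_neg_integrableOn_Ioi 0 (show (0:ℝ) < 1/l by positivity)).congr_fun
      (fun y hy => ?_) measurableSet_Ioi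
    rw [abs_of_pos hy]; ring_nf
  have hIic : IntegrableOn (fun y : ℝ => Real.exp (-|y| / l)) (Iic 0) := by
    rw [← Measure.map_neg_eq_self (volume : Measure ℝ)]
    have m : MeasurableEmbedding fun x : ℝ => -x := (Homeomorph.neg ℝ).measurableEmbedding
    rw [m.integrableOn_map_iff]
    simp_rw [Function.comp_def, abs_neg, neg_preimage, neg_Iic, neg_zero]
    exact (integrableOn_Ici_iff_integrableOn_Ioi).mpr hIoi
  have : Integrable (fun y : ℝ => Real.exp (-|y| / l)) := by
    rw [← integrableOn_univ, ← Set.Iic_union_Ioi (a := (0:ℝ))]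
    exact hIic.union hIoi
  exact (this.const_mul _)

lemma lapTail_nonneg {l : ℝ} (hl : 0 < l) (a : ℝ) : 0 ≤ lapTail l a :=
  integral_nonneg (fun y => lapDens_nonneg hl y)

lemma lapCDF_nonneg {l : ℝ} (hl : 0 < l) (a : ℝ) : 0 ≤ lapCDF l a :=
  integral_nonneg (fun y => lapDens_nonneg hl y)

lemma lapTail_le {l : ℝ} (hl : 0 < l) (a : ℝ) :
    lapTail l a ≤ ∫ y : ℝ, lapDens l y :=
  setIntegral_le_integral (lapDens_integrable hl)
    (Filter.Eventually.of_forall (lapDens_nonneg hl))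

lemma lapCDF_le {l : ℝ} (hl : 0 < l) (a : ℝ) :
    lapCDF l a ≤ ∫ y : ℝ, lapDens l y :=
  setIntegral_le_integral (lapDens_integrable hl)
    (Filter.Eventually.of_forall (lapDens_nonneg hl))

lemma lapTail_anti {l : ℝ} (hl : 0 < l) : Antitone (lapTail l) := by
  intro a b hab
  exact setIntegral_mono_set (lapDens_integrable hl).integrableOn
    (Filter.Eventually.of_forall (lapDens_nonneg hl))
    (HasSubset.Subset.eventuallyLE (Ioi_subset_Ioi hab))

lemma lapCDF_mono {l : ℝ} (hl : 0 < l) : Monotone (lapCDF l) := by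
  intro a b hab
  exact setIntegral_mono_set (lapDens_integrable hl).integrableOn
    (Filter.Eventually.of_forall (lapDens_nonneg hl))
    (HasSubset.Subset.eventuallyLE (Iic_subset_Iic.mpr hab))

lemma lapTail_shift {l : ℝ} (hl : 0 < l) (a : ℝ) :
    lapTail l (a - 1) ≤ Real.exp (1 / l) * lapTail l a := by
  have key : lapTail l (a - 1) = ∫ y in Ioi a, lapDens l (y - 1) := by
    show (∫ y in Ioi (a-1), lapDens l y) = _
    rw [← integral_indicator measurableSet_Ioi, ← integral_indicator measurableSet_Ioi,
      ← integral_sub_right_eq_self (fun y => (Ioi (a-1)).indicator (lapDens l) y) 1]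
    congr 1; ext y
    by_cases hy : a < y
    · rw [Set.indicator_of_mem (by simpa using hy),
        Set.indicator_of_mem (by simp; linarith)]
    · rw [Set.indicator_of_notMem (by simp; linarith), 
        Set.indicator_of_notMem (by simp; linarith)]
  rw [key, show Real.exp (1/l) * lapTail l a
      = ∫ y in Ioi a, Real.exp (1/l) * lapDens l y from (integral_const_mul _ _).symm]
  refine setIntegral_mono_on
    (((lapDens_integrable hl).comp_sub_right 1).integrableOn)
    (((lapDens_integrable hl).const_mul _).integrableOn)
    measurableSet_Ioi (fun y _ => ?_)
  unfold lapDens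
  have h1 : -|y - 1| / l ≤ 1 / l + -|y| / l := by
    rw [← add_div, div_le_div_iff_of_pos_right hl]
    have := abs_sub_abs_le_abs_sub y (y - 1)
    simp at this; linarith
  calc (1 / (2*l)) * Real.exp (-|y-1| / l)
      ≤ (1 / (2*l)) * Real.exp (1/l + -|y| / l) := by
        apply mul_le_mul_of_nonneg_left (Real.exp_le_exp.mpr h1) (by positivity)
    _ = Real.exp (1/l) * ((1 / (2*l)) * Real.exp (-|y| / l)) := by
        rw [Real.exp_add]; ring

/-- privacy inequality for the improved SVT (one direction of
neighboring datasets). -/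
theorem stmt14 (l θ : ℝ) (hl : 0 < l) (t : ℕ) (ht : 1 ≤ t)
    {ι : Type*} (q q' : ι → ℝ)
    (hq : ∀ i, q' i ≤ q i ∧ q i ≤ q' i + 1)
    (I O : Finset ι) (hI : I.card ≤ t)
    (h : ℝ → ℝ) (hh : h = fun x => (1 / (2 * l)) * Real.exp (-|x - θ| / l)) :
    (∫ x : ℝ, h x * (∏ i ∈ I, lapTail ((t : ℝ) * l) (x - q i)) *
        (∏ j ∈ O, lapCDF ((t : ℝ) * l) (x - q j))) ≤
      Real.exp (1 / l) *
        ∫ x : ℝ, h x * (∏ i ∈ I, lapTail ((t : ℝ) * l) (x - q' i)) *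
          (∏ j ∈ O, lapCDF ((t : ℝ) * l) (x - q' j)) := by
  have hh' : h = fun x => lapDens l (x - θ) := hh
  clear hh; subst hh'
  have ht0 : (0:ℝ) < t := by exact_mod_cast Nat.lt_of_lt_of_le Nat.zero_lt_one ht
  set L : ℝ := (t : ℝ) * l with hLdef
  have hL : 0 < L := mul_pos ht0 hl
  set C : ℝ := ∫ y : ℝ, lapDens L y with hCdef
  have hC0 : 0 ≤ C := integral_nonneg (lapDens_nonneg hL)
  have hInt : Integrable (fun x : ℝ => lapDens l (x - θ)) :=
    (lapDens_integrable hl).comp_sub_right θ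
  have hdnn : ∀ x : ℝ, 0 ≤ lapDens l (x - θ) := fun x => lapDens_nonneg hl _
  -- measurability
  have hcd : Continuous (lapDens l) := by unfold lapDens; fun_prop
  have hmh : Measurable (fun x : ℝ => lapDens l (x - θ)) :=
    hcd.measurable.comp (measurable_id.sub_const θ)
  have hmT : ∀ c : ℝ, Measurable (fun x : ℝ => lapTail L (x - c)) := fun c =>
    (lapTail_anti hL).measurable.comp (measurable_id.sub_const c)
  have hmC : ∀ c : ℝ, Measurable (fun x : ℝ => lapCDF L (x - c)) := fun c =>
    (lapCDF_mono hL).measurable.comp (measurable_id.sub_const c)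
  have hmG : Measurable (fun x : ℝ => lapDens l (x - θ) *
      (∏ i ∈ I, lapTail L (x - q' i)) * (∏ j ∈ O, lapCDF L (x - q' j))) :=
    (hmh.mul (Finset.measurable_prod I (fun i _ => hmT (q' i)))).mul
      (Finset.measurable_prod O (fun j _ => hmC (q' j)))
  -- integrability of RHS integrand
  have hGle : ∀ x : ℝ, lapDens l (x - θ) *
      (∏ i ∈ I, lapTail L (x - q' i)) * (∏ j ∈ O, lapCDF L (x - q' j))
      ≤ (C ^ I.card * C ^ O.card) * lapDens l (x - θ) := by
    intro x
    have hPI : (∏ i ∈ I, lapTail L (x - q' i)) ≤ C ^ I.card := by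
      calc (∏ i ∈ I, lapTail L (x - q' i)) ≤ ∏ _i ∈ I, C :=
            Finset.prod_le_prod (fun i _ => lapTail_nonneg hL _) (fun i _ => lapTail_le hL _)
        _ = C ^ I.card := Finset.prod_const C
    have hPO : (∏ j ∈ O, lapCDF L (x - q' j)) ≤ C ^ O.card := by
      calc (∏ j ∈ O, lapCDF L (x - q' j)) ≤ ∏ _j ∈ O, C :=
            Finset.prod_le_prod (fun j _ => lapCDF_nonneg hL _) (fun j _ => lapCDF_le hL _)
        _ = C ^ O.card := Finset.prod_const C
    have h1 : lapDens l (x - θ) * (∏ i ∈ I, lapTail L (x - q' i)) *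
        (∏ j ∈ O, lapCDF L (x - q' j)) ≤
        lapDens l (x - θ) * C ^ I.card * C ^ O.card := by
      apply mul_le_mul (mul_le_mul_of_nonneg_left hPI (hdnn x)) hPO
        (Finset.prod_nonneg (fun j _ => lapCDF_nonneg hL _))
        (mul_nonneg (hdnn x) (pow_nonneg hC0 _))
    linarith [h1]
  have hGnn : ∀ x : ℝ, 0 ≤ lapDens l (x - θ) *
      (∏ i ∈ I, lapTail L (x - q' i)) * (∏ j ∈ O, lapCDF L (x - q' j)) := fun x =>
    mul_nonneg (mul_nonneg (hdnn x) (Finset.prod_nonneg (fun i _ => lapTail_nonneg hL _)))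
      (Finset.prod_nonneg (fun j _ => lapCDF_nonneg hL _))
  have hGint : Integrable (fun x : ℝ => lapDens l (x - θ) *
      (∏ i ∈ I, lapTail L (x - q' i)) * (∏ j ∈ O, lapCDF L (x - q' j))) := by
    refine Integrable.mono' (hInt.const_mul (C ^ I.card * C ^ O.card))
      hmG.aestronglyMeasurable (Filter.Eventually.of_forall (fun x => ?_))
    rw [Real.norm_eq_abs, abs_of_nonneg (hGnn x)]
    exact hGle x
  -- pointwise key inequality
  have key : ∀ x : ℝ, lapDens l (x - θ) *
      (∏ i ∈ I, lapTail L (x - q i)) * (∏ j ∈ O, lapCDF L (x - q j)) ≤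
      Real.exp (1 / l) * (lapDens l (x - θ) *
        (∏ i ∈ I, lapTail L (x - q' i)) * (∏ j ∈ O, lapCDF L (x - q' j))) := by
    intro x
    have hQ : (∏ j ∈ O, lapCDF L (x - q j)) ≤ ∏ j ∈ O, lapCDF L (x - q' j) :=
      Finset.prod_le_prod (fun j _ => lapCDF_nonneg hL _)
        (fun j _ => lapCDF_mono hL (by linarith [(hq j).1]))
    have hP : (∏ i ∈ I, lapTail L (x - q i)) ≤
        Real.exp (1 / L) ^ I.card * ∏ i ∈ I, lapTail L (x - q' i) := by
      calc (∏ i ∈ I, lapTail L (x - q i))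
          ≤ ∏ i ∈ I, (Real.exp (1 / L) * lapTail L (x - q' i)) :=
            Finset.prod_le_prod (fun i _ => lapTail_nonneg hL _) (fun i _ => by
              have h1 : lapTail L (x - q i) ≤ lapTail L ((x - q' i) - 1) :=
                lapTail_anti hL (by linarith [(hq i).2])
              exact h1.trans (lapTail_shift hL _))
        _ = _ := by rw [Finset.prod_mul_distrib, Finset.prod_const]
    have hK : Real.exp (1 / L) ^ I.card ≤ Real.exp (1 / l) := by
      rw [← Real.exp_nat_mul]
      apply Real.exp_le_exp.mpr
      have hcard : (I.card : ℝ) ≤ (t : ℝ) := by exact_mod_cast hI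
      have h2 : (I.card : ℝ) * (1 / L) ≤ (t : ℝ) * (1 / L) :=
        mul_le_mul_of_nonneg_right hcard (by positivity)
      have h3 : (t : ℝ) * (1 / L) = 1 / l := by
        rw [hLdef]; field_simp
      linarith
    have hKnn : (0:ℝ) ≤ Real.exp (1 / L) ^ I.card := pow_nonneg (Real.exp_pos _).le _
    calc lapDens l (x - θ) * (∏ i ∈ I, lapTail L (x - q i)) * (∏ j ∈ O, lapCDF L (x - q j))
        ≤ lapDens l (x - θ) * (Real.exp (1 / L) ^ I.card * ∏ i ∈ I, lapTail L (x - q' i)) *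
          (∏ j ∈ O, lapCDF L (x - q' j)) := by
          apply mul_le_mul (mul_le_mul_of_nonneg_left hP (hdnn x)) hQ
            (Finset.prod_nonneg (fun j _ => lapCDF_nonneg hL _))
            (mul_nonneg (hdnn x) (mul_nonneg hKnn
              (Finset.prod_nonneg (fun i _ => lapTail_nonneg hL _))))
      _ = Real.exp (1 / L) ^ I.card * (lapDens l (x - θ) *
            (∏ i ∈ I, lapTail L (x - q' i)) * (∏ j ∈ O, lapCDF L (x - q' j))) := by ring
      _ ≤ Real.exp (1 / l) * (lapDens l (x - θ) *
            (∏ i ∈ I, lapTail L (x - q' i)) * (∏ j ∈ O, lapCDF L (x - q' j))) :=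
          mul_le_mul_of_nonneg_right hK (hGnn x)
  rw [← integral_const_mul]
  exact integral_mono_of_nonneg
    (Filter.Eventually.of_forall (fun x =>
      mul_nonneg (mul_nonneg (hdnn x) (Finset.prod_nonneg (fun i _ => lapTail_nonneg hL _)))
        (Finset.prod_nonneg (fun j _ => lapCDF_nonneg hL _))))
    (hGint.const_mul _)
    (Filter.Eventually.of_forall key)
end
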